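/- For every β > 1 and every z < 0, the R-transform of the WBE distribution dominates the R-transform of the Marčenko–Pastur distribution: 2/(1−βz + √((βz−1)²+4z)) ≥ 1/(1−βz). -/
import Mathlib

/-- For `β > 1` and `z < 0`, the R-transform of the WBE distribution dominates
that of the Marčenko–Pastur distribution. -/
theorem wbe_R_ge_mp_R (β z : ℝ) (hβ : 1 < β) (hz : z < 0) :
    1 / (1 - β * z) ≤ 2 / (1 - β * z + Real.sqrt ((β * z - 1) ^ 2 + 4 * z)) := by
  have h1 : 0 < 1 - β * z := by nlinarith
  have hsn : 0 ≤ Real.sqrt ((β * z - 1) ^ 2 + 4 * z) := Real.sqrt_nonneg _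
  have hs : Real.sqrt ((β * z - 1) ^ 2 + 4 * z) ≤ 1 - β * z := by
    calc Real.sqrt ((β * z - 1) ^ 2 + 4 * z)
        ≤ Real.sqrt ((β * z - 1) ^ 2) := Real.sqrt_le_sqrt (by nlinarith)
      _ = |β * z - 1| := Real.sqrt_sq_eq_abs _
      _ = 1 - β * z := by rw [abs_of_nonpos (by linarith)]; ring
  rw [div_le_div_iff₀ h1 (by linarith)]
  nlinarith
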